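/- Given 0 < r < 1, N > 0, and φ₀ ∈ H^s(ℝⁿ) with s > n/2 and ‖φ₀‖_{H^s} ≤ r N, there exists a unique solution (φ, ψ) ∈ C([0,T], H^s × H^s) of the exciton-polariton system iφ_t = −Δφ + γψ, iψ_t = (ω₀ + g|ψ|²)ψ + γφ with φ(0) = φ₀, ψ(0) = 0, subject to ‖φ‖, ‖ψ‖ ≤ N in C([0,T], H^s), where T = (1 − r)/(2γ + |g| K̃ N²) for a constant K̃ depending only on s, n. -/

import Mathlib

open Set MeasureTheory

section EPAux
variable {E : Type*} [NormedAddCommGroup E] [NormedSpace ℂ E] [CompleteSpace E]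

/-- norm of the oscillatory factor is 1 -/
lemma ep_norm_exp (ω₀ x : ℝ) : ‖Complex.exp (-(Complex.I) * (ω₀ : ℂ) * ((x:ℝ) : ℂ))‖ = 1 := by
  rw [Complex.norm_exp]
  simp

noncomputable def epPhi1 (U : ℝ → E →ₗᵢ[ℂ] E) (γ : ℝ) (φ₀ : E) (f : ℝ → E) : ℝ → E :=
  fun t => U t φ₀ - (Complex.I * (γ : ℂ)) • ∫ τ in (0:ℝ)..t, U (t - τ) (f τ)

noncomputable def epPhi2 (Ncub : E → E) (γ g ω₀ : ℝ) (f1 f2 : ℝ → E) : ℝ → E :=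
  fun t => -(Complex.I) • ∫ τ in (0:ℝ)..t,
    Complex.exp (-(Complex.I) * (ω₀ : ℂ) * ((t - τ : ℝ) : ℂ)) •
      ((g : ℂ) • Ncub (f2 τ) + (γ : ℂ) • f1 τ)

lemma epPhi1_cont (U : ℝ → E →ₗᵢ[ℂ] E) (hU : Continuous fun q : ℝ × E => U q.1 q.2)
    (γ : ℝ) (φ₀ : E) (f : ℝ → E) (hf : Continuous f) :
    Continuous (epPhi1 U γ φ₀ f) := by
  unfold epPhi1
  apply Continuous.sub
  · exact hU.comp (continuous_id.prodMk continuous_const)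
  · apply Continuous.smul continuous_const
    exact intervalIntegral.continuous_parametric_intervalIntegral_of_continuous
      (f := fun t τ => U (t - τ) (f τ))
      (hU.comp (((continuous_fst.sub continuous_snd)).prodMk (hf.comp continuous_snd)))
      continuous_id

lemma epPhi2_cont (Ncub : E → E) (hNc : Continuous Ncub) (γ g ω₀ : ℝ)
    (f1 f2 : ℝ → E) (hf1 : Continuous f1) (hf2 : Continuous f2) :
    Continuous (epPhi2 Ncub γ g ω₀ f1 f2) := by
  unfold epPhi2
  apply Continuous.smul continuous_const
  exact intervalIntegral.continuous_parametric_intervalIntegral_of_continuous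
    (f := fun t τ => Complex.exp (-(Complex.I) * (ω₀ : ℂ) * ((t - τ : ℝ) : ℂ)) •
      ((g : ℂ) • Ncub (f2 τ) + (γ : ℂ) • f1 τ))
    (by
      apply Continuous.smul
      · exact Complex.continuous_exp.comp
          (continuous_const.mul (Complex.continuous_ofReal.comp
            (continuous_fst.sub continuous_snd)))
      · exact ((continuous_const.smul (hNc.comp (hf2.comp continuous_snd))).add
          (continuous_const.smul (hf1.comp continuous_snd))))
    continuous_id

end EPAux

section EPAux2
variable {E : Type*} [NormedAddCommGroup E] [NormedSpace ℂ E] [CompleteSpace E]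

lemma ep_int1_bound (U : ℝ → E →ₗᵢ[ℂ] E) (f : ℝ → E) {Nb : ℝ} (t : ℝ)
    (hf : ∀ τ, ‖f τ‖ ≤ Nb) :
    ‖∫ τ in (0:ℝ)..t, U (t - τ) (f τ)‖ ≤ Nb * |t| := by
  have := intervalIntegral.norm_integral_le_of_norm_le_const (a := (0:ℝ)) (b := t) (C := Nb)
    (f := fun τ => U (t - τ) (f τ)) (fun x _ => by simpa using hf x)
  simpa using this

lemma ep_int2_bound (f : ℝ → E) {C ω₀ : ℝ} (t : ℝ)
    (hf : ∀ τ, ‖f τ‖ ≤ C) :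
    ‖∫ τ in (0:ℝ)..t,
        Complex.exp (-(Complex.I) * (ω₀ : ℂ) * ((t - τ : ℝ) : ℂ)) • f τ‖ ≤ C * |t| := by
  have := intervalIntegral.norm_integral_le_of_norm_le_const (a := (0:ℝ)) (b := t) (C := C)
    (f := fun τ => Complex.exp (-(Complex.I) * (ω₀ : ℂ) * ((t - τ : ℝ) : ℂ)) • f τ)
    (fun x _ => by
      rw [norm_smul, ep_norm_exp, one_mul]; exact hf x)
  simpa using this

lemma ep_phi1_sub (U : ℝ → E →ₗᵢ[ℂ] E) (hU : Continuous fun q : ℝ × E => U q.1 q.2)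
    (γ : ℝ) (φ₀ : E) (f f' : ℝ → E) (hf : Continuous f) (hf' : Continuous f') (t : ℝ) :
    epPhi1 U γ φ₀ f t - epPhi1 U γ φ₀ f' t
      = (Complex.I * (γ : ℂ)) • ∫ τ in (0:ℝ)..t, U (t - τ) (f' τ - f τ) := by
  have hc : ∀ g : ℝ → E, Continuous g →
      IntervalIntegrable (fun τ => U (t - τ) (g τ)) volume 0 t := fun g hg =>
    (hU.comp ((continuous_const.sub continuous_id).prodMk hg)).intervalIntegrable _ _
  have : (fun τ => U (t - τ) (f' τ - f τ))
      = fun τ => U (t - τ) (f' τ) - U (t - τ) (f τ) := funext fun τ => map_sub _ _ _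
  rw [this, intervalIntegral.integral_sub (hc f' hf') (hc f hf)]
  unfold epPhi1
  module

lemma ep_phi2_sub (Ncub : E → E) (hNc : Continuous Ncub) (γ g ω₀ : ℝ)
    (f1 f2 f1' f2' : ℝ → E) (hf1 : Continuous f1) (hf2 : Continuous f2)
    (hf1' : Continuous f1') (hf2' : Continuous f2') (t : ℝ) :
    epPhi2 Ncub γ g ω₀ f1 f2 t - epPhi2 Ncub γ g ω₀ f1' f2' t
      = -(Complex.I) • ∫ τ in (0:ℝ)..t,
          Complex.exp (-(Complex.I) * (ω₀ : ℂ) * ((t - τ : ℝ) : ℂ)) •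
            ((g : ℂ) • (Ncub (f2 τ) - Ncub (f2' τ)) + (γ : ℂ) • (f1 τ - f1' τ)) := by
  have hc : ∀ a b : ℝ → E, Continuous a → Continuous b →
      IntervalIntegrable (fun τ => Complex.exp (-(Complex.I) * (ω₀ : ℂ) * ((t - τ : ℝ) : ℂ)) •
        ((g : ℂ) • Ncub (b τ) + (γ : ℂ) • a τ)) volume 0 t := by
    intro a b ha hb
    apply Continuous.intervalIntegrable
    apply Continuous.smul
    · exact Complex.continuous_exp.comp
        (continuous_const.mul (Complex.continuous_ofReal.comp
          (continuous_const.sub continuous_id)))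
    · exact (continuous_const.smul (hNc.comp hb)).add (continuous_const.smul ha)
  have : (fun τ => Complex.exp (-(Complex.I) * (ω₀ : ℂ) * ((t - τ : ℝ) : ℂ)) •
            ((g : ℂ) • (Ncub (f2 τ) - Ncub (f2' τ)) + (γ : ℂ) • (f1 τ - f1' τ)))
      = fun τ => (Complex.exp (-(Complex.I) * (ω₀ : ℂ) * ((t - τ : ℝ) : ℂ)) •
            ((g : ℂ) • Ncub (f2 τ) + (γ : ℂ) • f1 τ))
          - (Complex.exp (-(Complex.I) * (ω₀ : ℂ) * ((t - τ : ℝ) : ℂ)) •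
            ((g : ℂ) • Ncub (f2' τ) + (γ : ℂ) • f1' τ)) := by
    funext τ
    rw [← smul_sub]
    congr 1
    module
  rw [this, intervalIntegral.integral_sub (hc f1 f2 hf1 hf2) (hc f1' f2' hf1' hf2')]
  unfold epPhi2
  module

end EPAux2

section EPAux3
variable {E : Type*} [NormedAddCommGroup E] [NormedSpace ℂ E] [CompleteSpace E]

noncomputable def epExt {T : ℝ} (hT : (0:ℝ) ≤ T) (p : C(↥(Icc (0:ℝ) T), E × E)) : ℝ → E × E :=
  fun t => p (projIcc 0 T hT t)

lemma epExt_cont {T : ℝ} (hT : (0:ℝ) ≤ T) (p : C(↥(Icc (0:ℝ) T), E × E)) :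
    Continuous (epExt hT p) := p.continuous.comp continuous_projIcc

noncomputable def epPhiMap (U : ℝ → E →ₗᵢ[ℂ] E) (hU : Continuous fun q : ℝ × E => U q.1 q.2)
    (Ncub : E → E) (hNc : Continuous Ncub) (γ g ω₀ : ℝ) (φ₀ : E) {T : ℝ} (hT : (0:ℝ) ≤ T)
    (p : C(↥(Icc (0:ℝ) T), E × E)) : C(↥(Icc (0:ℝ) T), E × E) :=
  ⟨fun t => (epPhi1 U γ φ₀ (fun τ => (epExt hT p τ).2) t.1,
             epPhi2 Ncub γ g ω₀ (fun τ => (epExt hT p τ).1) (fun τ => (epExt hT p τ).2) t.1),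
   by
    apply Continuous.prodMk
    · exact (epPhi1_cont U hU γ φ₀ _ ((epExt_cont hT p).snd)).comp continuous_subtype_val
    · exact (epPhi2_cont Ncub hNc γ g ω₀ _ _ ((epExt_cont hT p).fst)
        ((epExt_cont hT p).snd)).comp continuous_subtype_val⟩

end EPAux3

set_option maxHeartbeats 1000000


/-- The property of being a solution of the exciton-polariton Duhamel system
`φ(t) = e^{itΔ}φ₀ − iγ∫₀ᵗ e^{i(t−τ)Δ}ψ(τ)dτ`,
`ψ(t) = −i∫₀ᵗ e^{−iω₀(t−τ)}(g|ψ|²ψ(τ) + γφ(τ))dτ`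
on `[0,T]`, continuous and bounded by `Nb` in norm.  Here `U t` plays the role of the free
Schrödinger group `e^{itΔ}` on `H^s(ℝⁿ)` (`s > n/2`) and `Ncub u = |u|²u`. -/
def IsEPSolution {E : Type*} [NormedAddCommGroup E] [NormedSpace ℂ E]
    (U : ℝ → E →ₗᵢ[ℂ] E) (Ncub : E → E) (γ g ω₀ Nb T : ℝ) (φ₀ : E)
    (φ ψ : ℝ → E) : Prop :=
  ContinuousOn φ (Icc 0 T) ∧ ContinuousOn ψ (Icc 0 T) ∧
  (∀ t ∈ Icc (0:ℝ) T, ‖φ t‖ ≤ Nb ∧ ‖ψ t‖ ≤ Nb) ∧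
  (∀ t ∈ Icc (0:ℝ) T,
    φ t = U t φ₀ - (Complex.I * (γ : ℂ)) • ∫ τ in (0:ℝ)..t, U (t - τ) (ψ τ) ∧
    ψ t = -(Complex.I) • ∫ τ in (0:ℝ)..t,
        Complex.exp (-(Complex.I) * (ω₀ : ℂ) * ((t - τ : ℝ) : ℂ)) •
          ((g : ℂ) • Ncub (ψ τ) + (γ : ℂ) • φ τ)) ∧
  φ 0 = φ₀ ∧ ψ 0 = 0

/-- Existence and uniqueness for the exciton-polariton system: given `0 < r < 1`, `N > 0`,
and `φ₀` with `‖φ₀‖ ≤ r N`, there is a unique solution `(φ, ψ)` of the exciton-polariton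
system with `φ(0) = φ₀`, `ψ(0) = 0`, subject to `‖φ‖, ‖ψ‖ ≤ N`, on `[0,T]` with
`T = (1 − r)/(2γ + |g| K̃ N²)`, `K̃ = max K K'` where `K, K'` are the cubic estimate
constants of the Banach algebra `H^s(ℝⁿ)`, `s > n/2` (abstracted as `E`, with `U t = e^{itΔ}`
strongly continuous and isometric, and `Ncub u = |u|²u`). -/
theorem stmt8 {E : Type*} [NormedAddCommGroup E] [NormedSpace ℂ E] [CompleteSpace E]
    (r Nb γ g ω₀ K K' : ℝ) (hr : 0 < r) (hr1 : r < 1) (hNb : 0 < Nb) (hγ : 0 < γ)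
    (hK : 0 ≤ K) (hK' : 0 ≤ K')
    (U : ℝ → E →ₗᵢ[ℂ] E) (hU : Continuous fun q : ℝ × E => U q.1 q.2) (hU0 : U 0 = .id)
    (Ncub : E → E) (hNc : Continuous Ncub) (hN0 : Ncub 0 = 0)
    (hKcub : ∀ u : E, ‖Ncub u‖ ≤ K * ‖u‖ ^ 3)
    (hKlip : ∀ u v : E, ‖Ncub u - Ncub v‖ ≤ K' * (max ‖u‖ ‖v‖) ^ 2 * ‖u - v‖)
    (φ₀ : E) (hφ₀ : ‖φ₀‖ ≤ r * Nb) :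
    ∃ φ ψ : ℝ → E,
      IsEPSolution U Ncub γ g ω₀ Nb ((1 - r) / (2 * γ + |g| * max K K' * Nb ^ 2)) φ₀ φ ψ ∧
      ∀ φ' ψ' : ℝ → E,
        IsEPSolution U Ncub γ g ω₀ Nb ((1 - r) / (2 * γ + |g| * max K K' * Nb ^ 2)) φ₀ φ' ψ' →
        ∀ t ∈ Icc (0:ℝ) ((1 - r) / (2 * γ + |g| * max K K' * Nb ^ 2)),
          φ' t = φ t ∧ ψ' t = ψ t := by
  have hKtK : K ≤ max K K' := le_max_left _ _
  have hKtK' : K' ≤ max K K' := le_max_right _ _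
  have hKt0 : (0:ℝ) ≤ max K K' := le_trans hK hKtK
  have hc0 : (0:ℝ) ≤ |g| * max K K' * Nb ^ 2 := by positivity
  set D : ℝ := 2 * γ + |g| * max K K' * Nb ^ 2 with hDdef
  have hD0 : 0 < D := by rw [hDdef]; linarith
  have h1r : 0 < 1 - r := by linarith
  set T : ℝ := (1 - r) / D with hTdef
  have hT : 0 < T := div_pos h1r hD0
  -- numeric bounds
  set L : ℝ := T * (γ + |g| * max K K' * Nb ^ 2) with hLdef
  have hL0 : 0 ≤ L := by rw [hLdef]; positivity
  have hLle : L ≤ 1 - r := by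
    rw [hLdef, hTdef, div_mul_eq_mul_div, div_le_iff₀ hD0]
    nlinarith
  have hL1 : L < 1 := lt_of_le_of_lt hLle (by linarith)
  have hγT : γ * T ≤ (1 - r) / 2 := by
    rw [hTdef, mul_div_assoc', div_le_div_iff₀ hD0 (by norm_num)]
    nlinarith
  have hγTL : γ * T ≤ L := by rw [hLdef]; nlinarith
  have hK'L : T * (γ + |g| * K' * Nb ^ 2) ≤ L := by
    rw [hLdef]
    have : |g| * K' * Nb ^ 2 ≤ |g| * max K K' * Nb ^ 2 := by
      apply mul_le_mul_of_nonneg_right _ (by positivity)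
      exact mul_le_mul_of_nonneg_left hKtK' (abs_nonneg g)
    nlinarith [hT.le]
  -- the closed ball S
  set S : Set C(↥(Icc (0:ℝ) T), E × E) :=
    {p | ∀ t, ‖(p t).1‖ ≤ Nb ∧ ‖(p t).2‖ ≤ Nb} with hSdef
  have hSclosed : IsClosed S := by
    have : S = ⋂ t, (fun p : C(↥(Icc (0:ℝ) T), E × E) => p t) ⁻¹'
        {v : E × E | ‖v.1‖ ≤ Nb ∧ ‖v.2‖ ≤ Nb} := by
      ext p; simp [hSdef, mem_iInter]
    rw [this]
    refine isClosed_iInter fun t => IsClosed.preimage (continuous_eval_const t) ?_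
    exact ((isClosed_le (continuous_norm.comp continuous_fst) continuous_const).inter
      (isClosed_le (continuous_norm.comp continuous_snd) continuous_const))
  haveI : CompleteSpace ↥S := hSclosed.completeSpace_coe
  haveI : Nonempty ↥S :=
    ⟨⟨ContinuousMap.const _ ((0:E), (0:E)), fun t => by simp [hNb.le]⟩⟩
  -- Φ maps S to S
  have hmaps : ∀ p ∈ S, epPhiMap U hU Ncub hNc γ g ω₀ φ₀ hT.le p ∈ S := by
    intro p hp t
    have hb1 : ∀ τ : ℝ, ‖(epExt hT.le p τ).1‖ ≤ Nb := fun τ => (hp _).1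
    have hb2 : ∀ τ : ℝ, ‖(epExt hT.le p τ).2‖ ≤ Nb := fun τ => (hp _).2
    obtain ⟨ht0, htT⟩ := t.2
    have habs : |(t:ℝ)| ≤ T := by rw [_root_.abs_of_nonneg ht0]; exact htT
    simp only [hSdef, mem_setOf_eq, epPhiMap, ContinuousMap.coe_mk, epPhi1, epPhi2]
    constructor
    · have h1 : ‖∫ τ in (0:ℝ)..(t:ℝ), U ((t:ℝ) - τ) ((epExt hT.le p τ).2)‖
          ≤ Nb * |(t:ℝ)| := ep_int1_bound U _ _ hb2
      have h2 : ‖(Complex.I * (γ:ℂ))‖ = γ := by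
        simp [map_mul,
          _root_.abs_of_pos hγ]
      refine le_trans (norm_sub_le _ _) ?_
      rw [norm_smul, h2, LinearIsometry.norm_map]
      have h3 : Nb * |(t:ℝ)| ≤ Nb * T := mul_le_mul_of_nonneg_left habs hNb.le
      have h4 : γ * ‖∫ τ in (0:ℝ)..(t:ℝ), U ((t:ℝ) - τ) ((epExt hT.le p τ).2)‖
          ≤ γ * (Nb * T) := mul_le_mul_of_nonneg_left (le_trans h1 h3) hγ.le
      have := add_le_add hφ₀ h4
      refine le_trans this ?_
      nlinarith
    · have hC : ∀ τ : ℝ, ‖(g:ℂ) • Ncub ((epExt hT.le p τ).2) + (γ:ℂ) • (epExt hT.le p τ).1‖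
          ≤ |g| * (K * Nb ^ 3) + γ * Nb := by
        intro τ
        refine le_trans (norm_add_le _ _) ?_
        rw [norm_smul, norm_smul]
        simp only [Complex.norm_real, Real.norm_eq_abs]
        apply add_le_add
        · apply mul_le_mul_of_nonneg_left _ (abs_nonneg g)
          refine le_trans (hKcub _) ?_
          exact mul_le_mul_of_nonneg_left
            (pow_le_pow_left₀ (norm_nonneg _) (hb2 τ) 3) hK
        · rw [_root_.abs_of_pos hγ]
          exact mul_le_mul_of_nonneg_left (hb1 τ) hγ.le
      have h1 := ep_int2_bound (E := E) (ω₀ := ω₀)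
        (fun τ => (g:ℂ) • Ncub ((epExt hT.le p τ).2) + (γ:ℂ) • (epExt hT.le p τ).1) (t:ℝ) hC
      rw [norm_smul]
      have hnI : ‖-(Complex.I)‖ = 1 := by simp
      rw [hnI, one_mul]
      refine le_trans h1 ?_
      have h3 : (|g| * (K * Nb ^ 3) + γ * Nb) * |(t:ℝ)| ≤ (|g| * (K * Nb ^ 3) + γ * Nb) * T :=
        mul_le_mul_of_nonneg_left habs (by positivity)
      refine le_trans h3 ?_
      have h5 : |g| * K * Nb ^ 2 ≤ |g| * max K K' * Nb ^ 2 := by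
        apply mul_le_mul_of_nonneg_right _ (by positivity)
        exact mul_le_mul_of_nonneg_left hKtK (abs_nonneg g)
      have h6 : T * (γ + |g| * K * Nb ^ 2) ≤ L := by
        rw [hLdef]
        apply mul_le_mul_of_nonneg_left _ hT.le
        linarith
      calc (|g| * (K * Nb ^ 3) + γ * Nb) * T = Nb * (T * (γ + |g| * K * Nb ^ 2)) := by ring
        _ ≤ Nb * L := mul_le_mul_of_nonneg_left h6 hNb.le
        _ ≤ Nb * 1 := mul_le_mul_of_nonneg_left hL1.le hNb.le
        _ = Nb := mul_one Nb
  -- Lipschitz estimate on S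
  have hlip : ∀ p ∈ S, ∀ q ∈ S,
      dist (epPhiMap U hU Ncub hNc γ g ω₀ φ₀ hT.le p) (epPhiMap U hU Ncub hNc γ g ω₀ φ₀ hT.le q)
        ≤ L * dist p q := by
    intro p hp q hq
    have hd0 : (0:ℝ) ≤ dist p q := dist_nonneg
    have hdist : ∀ τ : ℝ, dist (epExt hT.le p τ) (epExt hT.le q τ) ≤ dist p q := fun τ =>
      ContinuousMap.dist_apply_le_dist _
    have hd1 : ∀ τ : ℝ, ‖(epExt hT.le p τ).1 - (epExt hT.le q τ).1‖ ≤ dist p q := by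
      intro τ
      rw [← dist_eq_norm]
      refine le_trans ?_ (hdist τ)
      rw [Prod.dist_eq]; exact le_max_left _ _
    have hd2 : ∀ τ : ℝ, ‖(epExt hT.le p τ).2 - (epExt hT.le q τ).2‖ ≤ dist p q := by
      intro τ
      rw [← dist_eq_norm]
      refine le_trans ?_ (hdist τ)
      rw [Prod.dist_eq]; exact le_max_right _ _
    rw [ContinuousMap.dist_le (by positivity)]
    intro t
    obtain ⟨ht0, htT⟩ := t.2
    have habs : |(t:ℝ)| ≤ T := by rw [_root_.abs_of_nonneg ht0]; exact htT
    simp only [epPhiMap, ContinuousMap.coe_mk, Prod.dist_eq]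
    apply max_le
    · rw [dist_eq_norm,
        ep_phi1_sub U hU γ φ₀ _ _ ((epExt_cont hT.le p).snd) ((epExt_cont hT.le q).snd),
        norm_smul]
      have h2 : ‖(Complex.I * (γ:ℂ))‖ = γ := by
        simp [map_mul,
          _root_.abs_of_pos hγ]
      rw [h2]
      have hb : ∀ τ : ℝ, ‖(epExt hT.le q τ).2 - (epExt hT.le p τ).2‖ ≤ dist p q := by
        intro τ; rw [norm_sub_rev]; exact hd2 τ
      have h1 := ep_int1_bound U
        (fun τ => (epExt hT.le q τ).2 - (epExt hT.le p τ).2) (t:ℝ) hb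
      calc γ * ‖∫ τ in (0:ℝ)..(t:ℝ),
              U ((t:ℝ) - τ) ((epExt hT.le q τ).2 - (epExt hT.le p τ).2)‖
          ≤ γ * (dist p q * |(t:ℝ)|) := mul_le_mul_of_nonneg_left h1 hγ.le
        _ ≤ γ * (dist p q * T) := by gcongr
        _ = (γ * T) * dist p q := by ring
        _ ≤ L * dist p q := mul_le_mul_of_nonneg_right hγTL hd0
    · rw [dist_eq_norm,
        ep_phi2_sub Ncub hNc γ g ω₀ _ _ _ _ ((epExt_cont hT.le p).fst)
          ((epExt_cont hT.le p).snd) ((epExt_cont hT.le q).fst) ((epExt_cont hT.le q).snd),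
        norm_smul]
      have hnI : ‖-(Complex.I)‖ = 1 := by simp
      rw [hnI, one_mul]
      have hC : ∀ τ : ℝ,
          ‖(g:ℂ) • (Ncub ((epExt hT.le p τ).2) - Ncub ((epExt hT.le q τ).2))
            + (γ:ℂ) • ((epExt hT.le p τ).1 - (epExt hT.le q τ).1)‖
          ≤ (|g| * K' * Nb ^ 2 + γ) * dist p q := by
        intro τ
        refine le_trans (norm_add_le _ _) ?_
        rw [norm_smul, norm_smul]
        simp only [Complex.norm_real, Real.norm_eq_abs]
        have hmax : max ‖(epExt hT.le p τ).2‖ ‖(epExt hT.le q τ).2‖ ≤ Nb :=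
          max_le (hp _).2 (hq _).2
        have hmax0 : (0:ℝ) ≤ max ‖(epExt hT.le p τ).2‖ ‖(epExt hT.le q τ).2‖ :=
          le_trans (norm_nonneg _) (le_max_left _ _)
        have hsq : (max ‖(epExt hT.le p τ).2‖ ‖(epExt hT.le q τ).2‖) ^ 2 ≤ Nb ^ 2 :=
          pow_le_pow_left₀ hmax0 hmax 2
        have hN : ‖Ncub ((epExt hT.le p τ).2) - Ncub ((epExt hT.le q τ).2)‖
            ≤ K' * Nb ^ 2 * dist p q := by
          refine le_trans (hKlip _ _) ?_
          calc K' * (max ‖(epExt hT.le p τ).2‖ ‖(epExt hT.le q τ).2‖) ^ 2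
                * ‖(epExt hT.le p τ).2 - (epExt hT.le q τ).2‖
              ≤ K' * Nb ^ 2 * ‖(epExt hT.le p τ).2 - (epExt hT.le q τ).2‖ := by gcongr
            _ ≤ K' * Nb ^ 2 * dist p q := by
                apply mul_le_mul_of_nonneg_left (hd2 τ) (by positivity)
        have hφd : |γ| * ‖(epExt hT.le p τ).1 - (epExt hT.le q τ).1‖ ≤ γ * dist p q := by
          rw [_root_.abs_of_pos hγ]
          exact mul_le_mul_of_nonneg_left (hd1 τ) hγ.le
        have hgN : |g| * ‖Ncub ((epExt hT.le p τ).2) - Ncub ((epExt hT.le q τ).2)‖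
            ≤ |g| * (K' * Nb ^ 2 * dist p q) :=
          mul_le_mul_of_nonneg_left hN (abs_nonneg g)
        calc |g| * ‖Ncub ((epExt hT.le p τ).2) - Ncub ((epExt hT.le q τ).2)‖
              + |γ| * ‖(epExt hT.le p τ).1 - (epExt hT.le q τ).1‖
            ≤ |g| * (K' * Nb ^ 2 * dist p q) + γ * dist p q := add_le_add hgN hφd
          _ = (|g| * K' * Nb ^ 2 + γ) * dist p q := by ring
      have h1 := ep_int2_bound (E := E) (ω₀ := ω₀)
        (fun τ => (g:ℂ) • (Ncub ((epExt hT.le p τ).2) - Ncub ((epExt hT.le q τ).2))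
          + (γ:ℂ) • ((epExt hT.le p τ).1 - (epExt hT.le q τ).1)) (t:ℝ) hC
      refine le_trans h1 ?_
      calc (|g| * K' * Nb ^ 2 + γ) * dist p q * |(t:ℝ)|
          ≤ (|g| * K' * Nb ^ 2 + γ) * dist p q * T := by
            apply mul_le_mul_of_nonneg_left habs (by positivity)
        _ = (T * (γ + |g| * K' * Nb ^ 2)) * dist p q := by ring
        _ ≤ L * dist p q := mul_le_mul_of_nonneg_right hK'L hd0
  -- the contraction on S
  let ΦS : ↥S → ↥S := fun p => ⟨epPhiMap U hU Ncub hNc γ g ω₀ φ₀ hT.le p.1, hmaps p.1 p.2⟩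
  have hContr : ContractingWith L.toNNReal ΦS := by
    constructor
    · exact Real.toNNReal_lt_one.2 hL1
    · apply LipschitzWith.of_dist_le_mul
      intro p q
      rw [Subtype.dist_eq, Subtype.dist_eq, Real.coe_toNNReal L hL0]
      exact hlip p.1 p.2 q.1 q.2
  set F := ContractingWith.fixedPoint ΦS hContr with hFdef
  have hFfix : ΦS F = F := hContr.fixedPoint_isFixedPt
  have hFeq : ∀ t : ↥(Icc (0:ℝ) T),
      (epPhiMap U hU Ncub hNc γ g ω₀ φ₀ hT.le F.1) t = F.1 t := fun t =>
    ContinuousMap.congr_fun (congrArg Subtype.val hFfix) t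
  have h0mem : (0:ℝ) ∈ Icc (0:ℝ) T := ⟨le_refl _, hT.le⟩
  -- the solution
  refine ⟨fun t => (epExt hT.le F.1 t).1, fun t => (epExt hT.le F.1 t).2, ?_, ?_⟩
  · -- IsEPSolution
    have hduhF : ∀ t (ht : t ∈ Icc (0:ℝ) T),
        (epExt hT.le F.1 t).1
            = epPhi1 U γ φ₀ (fun τ => (epExt hT.le F.1 τ).2) t ∧
        (epExt hT.le F.1 t).2
            = epPhi2 Ncub γ g ω₀ (fun τ => (epExt hT.le F.1 τ).1)
                (fun τ => (epExt hT.le F.1 τ).2) t := by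
      intro t ht
      have h := (hFeq ⟨t, ht⟩).symm
      have hE : epExt hT.le F.1 t = F.1 ⟨t, ht⟩ := by
        simp [epExt, projIcc_of_mem hT.le ht]
      rw [hE]
      constructor
      · have h1 := congrArg Prod.fst h
        simpa only [epPhiMap, ContinuousMap.coe_mk] using h1
      · have h2 := congrArg Prod.snd h
        simpa only [epPhiMap, ContinuousMap.coe_mk] using h2
    refine ⟨?_, ?_, ?_, ?_, ?_, ?_⟩
    · exact ((epExt_cont hT.le F.1).fst).continuousOn
    · exact ((epExt_cont hT.le F.1).snd).continuousOn
    · intro t ht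
      exact ⟨(F.2 _).1, (F.2 _).2⟩
    · intro t ht
      obtain ⟨hd1, hd2⟩ := hduhF t ht
      constructor
      · beta_reduce; rw [hd1]; simp only [epPhi1]
      · beta_reduce; rw [hd2]; simp only [epPhi2]
    · have := (hduhF 0 h0mem).1
      beta_reduce; rw [this]
      simp only [epPhi1, intervalIntegral.integral_same, smul_zero, sub_zero, hU0]
      rfl
    · have := (hduhF 0 h0mem).2
      beta_reduce; rw [this]
      simp only [epPhi2, intervalIntegral.integral_same, smul_zero]
  · -- uniqueness
    intro φ' ψ' hsol
    obtain ⟨hc1, hc2, hbnd, hduh, hini1, hini2⟩ := hsol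
    let p' : C(↥(Icc (0:ℝ) T), E × E) :=
      ⟨fun t => (φ' t, ψ' t), by
        apply Continuous.prodMk
        · exact hc1.restrict
        · exact hc2.restrict⟩
    have hp'S : p' ∈ S := by
      intro t
      exact hbnd t t.2
    have hfix : Function.IsFixedPt ΦS ⟨p', hp'S⟩ := by
      apply Subtype.ext
      show epPhiMap U hU Ncub hNc γ g ω₀ φ₀ hT.le p' = p'
      ext t
      · obtain ⟨ht0, htT⟩ := t.2
        obtain ⟨hdu1, hdu2⟩ := hduh (t:ℝ) t.2
        show epPhi1 U γ φ₀ (fun τ => (epExt hT.le p' τ).2) (t:ℝ) = φ' (t:ℝ)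
        rw [hdu1]
        simp only [epPhi1]
        congr 2
        apply intervalIntegral.integral_congr
        intro τ hτ
        rw [uIcc_of_le ht0] at hτ
        have hτIcc : τ ∈ Icc (0:ℝ) T := ⟨hτ.1, hτ.2.trans htT⟩
        simp only [epExt, projIcc_of_mem hT.le hτIcc]
        rfl
      · obtain ⟨ht0, htT⟩ := t.2
        obtain ⟨hdu1, hdu2⟩ := hduh (t:ℝ) t.2
        show epPhi2 Ncub γ g ω₀ (fun τ => (epExt hT.le p' τ).1)
            (fun τ => (epExt hT.le p' τ).2) (t:ℝ) = ψ' (t:ℝ)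
        rw [hdu2]
        simp only [epPhi2]
        congr 1
        apply intervalIntegral.integral_congr
        intro τ hτ
        rw [uIcc_of_le ht0] at hτ
        have hτIcc : τ ∈ Icc (0:ℝ) T := ⟨hτ.1, hτ.2.trans htT⟩
        simp only [epExt, projIcc_of_mem hT.le hτIcc]
        rfl
    have huniq := hContr.fixedPoint_unique hfix
    rw [← hFdef] at huniq
    intro t ht
    have hval := congrArg (fun z : ↥S => (z.1 : C(↥(Icc (0:ℝ) T), E × E)) ⟨t, ht⟩) huniq
    simp only at hval
    have hE : epExt hT.le F.1 t = F.1 ⟨t, ht⟩ := by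
      simp [epExt, projIcc_of_mem hT.le ht]
    constructor
    · show φ' t = (epExt hT.le F.1 t).1
      rw [hE, ← hval]
      rfl
    · show ψ' t = (epExt hT.le F.1 t).2
      rw [hE, ← hval]
      rfl
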